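/- The squared Frobenius distance ‖Σ(σ₁,σ₂,ρ,φ) − S‖²_F equals 2(σ₁⁴ + 2ρ²σ₁²σ₂² + σ₂⁴) − 2(P₁σ₁² + P₂σ₂²) − 4ρσ₁σ₂(R_c cos φ + R_s sin φ) + ‖S‖²_F, where P₁ = S₁₁ + S₂₂, P₂ = S₃₃ + S₄₄, R_c = S₁₃ − S₂₄, and R_s = S₁₄ + S₂₃. -/

import Mathlib

open Real Matrix

noncomputable def SigmaMat (σ₁ σ₂ ρ φ : ℝ) : Matrix (Fin 4) (Fin 4) ℝ :=
  !![σ₁^2, 0, ρ*σ₁*σ₂*Real.cos φ, ρ*σ₁*σ₂*Real.sin φ;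
     0, σ₁^2, ρ*σ₁*σ₂*Real.sin φ, -(ρ*σ₁*σ₂*Real.cos φ);
     ρ*σ₁*σ₂*Real.cos φ, ρ*σ₁*σ₂*Real.sin φ, σ₂^2, 0;
     ρ*σ₁*σ₂*Real.sin φ, -(ρ*σ₁*σ₂*Real.cos φ), 0, σ₂^2]

noncomputable def frobSq (A : Matrix (Fin 4) (Fin 4) ℝ) : ℝ :=
  ∑ i, ∑ j, (A i j)^2

set_option maxHeartbeats 1000000 in
theorem frobSq_dist (σ₁ σ₂ ρ φ : ℝ) (S : Matrix (Fin 4) (Fin 4) ℝ)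
    (hS : S.IsSymm) :
    frobSq (SigmaMat σ₁ σ₂ ρ φ - S) =
      2*(σ₁^4 + 2*ρ^2*σ₁^2*σ₂^2 + σ₂^4)
      - 2*((S 0 0 + S 1 1)*σ₁^2 + (S 2 2 + S 3 3)*σ₂^2)
      - 4*ρ*σ₁*σ₂*((S 0 2 - S 1 3)*Real.cos φ + (S 0 3 + S 1 2)*Real.sin φ)
      + frobSq S := by
  have h := fun i j => hS.apply i j
  have h01 := h 0 1; have h02 := h 0 2; have h03 := h 0 3
  have h12 := h 1 2; have h13 := h 1 3; have h23 := h 2 3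
  have hpy := Real.sin_sq_add_cos_sq φ
  simp only [frobSq, Matrix.sub_apply, Fin.sum_univ_four]
  simp only [SigmaMat, Matrix.of_apply, Matrix.cons_val', Matrix.cons_val, Matrix.empty_val', Matrix.cons_val_fin_one]
  rw [h01, h02, h03, h12, h13, h23]
  linear_combination (4*ρ^2*σ₁^2*σ₂^2) * hpy
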